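/- arXiv:1302.5742 — 2 statements merged into one kernel-verified Lean document; each statement's English description precedes it below -/
import Mathlib

section
/- Let k be a field of characteristic 3. Then the artinian complete intersection A = k[x,y,z]/(x²,y³,z³) fails the Weak Lefschetz Property: for every linear form L, the multiplication map ×L: A_2 → A_3 is not injective (both spaces have dimension 5). -/
open MvPolynomial Module

abbrev MPoly (k : Type) [Field k] (n : ℕ) := MvPolynomial (Fin n) k

variable {k : Type} [Field k] {n : ℕ}

def homogIdeal (I : Ideal (MPoly k n)) : Prop :=
  ∀ f ∈ I, ∀ i : ℕ, homogeneousComponent i f ∈ I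

noncomputable def comp (I : Ideal (MPoly k n)) (i : ℕ) : Submodule k (MPoly k n ⧸ I) :=
  (homogeneousSubmodule (Fin n) k i).map (Ideal.Quotient.mkₐ k I).toLinearMap

noncomputable def hilb (I : Ideal (MPoly k n)) (i : ℕ) : ℕ := finrank k (comp I i)

noncomputable def socle (I : Ideal (MPoly k n)) : Submodule k (MPoly k n ⧸ I) :=
  ⨅ j : Fin n, LinearMap.ker (LinearMap.mulLeft k (Ideal.Quotient.mk I (X j)))

def socDeg (I : Ideal (MPoly k n)) (e : ℕ) : Prop :=
  hilb I e ≠ 0 ∧ ∀ j, e < j → hilb I j = 0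

def injStep (L : MPoly k n) (I : Ideal (MPoly k n)) (i : ℕ) : Prop :=
  ∀ f : MPoly k n, f.IsHomogeneous i → L * f ∈ I → f ∈ I

def surjStep (L : MPoly k n) (I : Ideal (MPoly k n)) (i : ℕ) : Prop :=
  ∀ g : MPoly k n, g.IsHomogeneous (i + 1) → ∃ f, f.IsHomogeneous i ∧ g - L * f ∈ I

def WLP (I : Ideal (MPoly k n)) : Prop :=
  ∃ L : MPoly k n, L.IsHomogeneous 1 ∧ ∀ i : ℕ, injStep L I i ∨ surjStep L I i

def SLP (I : Ideal (MPoly k n)) : Prop :=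
  ∃ L : MPoly k n, L.IsHomogeneous 1 ∧ ∀ i j : ℕ, i ≤ j →
    ((∀ f : MPoly k n, f.IsHomogeneous i → L ^ (j - i) * f ∈ I → f ∈ I) ∨
     (∀ g : MPoly k n, g.IsHomogeneous j → ∃ f, f.IsHomogeneous i ∧ g - L ^ (j - i) * f ∈ I))

noncomputable def mulMap (L : MPoly k n) (hL : L.IsHomogeneous 1) (I : Ideal (MPoly k n)) (i : ℕ) :
    comp I i →ₗ[k] comp I (i + 1) :=
  (LinearMap.mulLeft k ((Ideal.Quotient.mk I) L)).restrict (by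
    rintro x ⟨f, hf, rfl⟩
    refine ⟨L * f, ?_, ?_⟩
    · simp only [SetLike.mem_coe, mem_homogeneousSubmodule] at hf ⊢
      exact Nat.add_comm 1 i ▸ hL.mul hf
    · simp [Ideal.Quotient.mkₐ_eq_mk, map_mul])


open Finsupp in
lemma ext3' {d e : Fin 3 →₀ ℕ} (h0 : d 0 = e 0) (h1 : d 1 = e 1) (h2 : d 2 = e 2) : d = e := by
  ext i; fin_cases i <;> assumption

open Finsupp in
lemma d_decomp' (d : Fin 3 →₀ ℕ) : d = single 0 (d 0) + single 1 (d 1) + single 2 (d 2) := by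
  refine ext3' ?_ ?_ ?_ <;> simp [Finsupp.single_apply]

lemma weight_one_eq' (d : Fin 3 →₀ ℕ) : (Finsupp.weight (1 : Fin 3 → ℕ)) d = d 0 + d 1 + d 2 := by
  rw [Finsupp.weight_apply, Finsupp.sum_fintype]
  · simp [Fin.sum_univ_three]
  · intro i; simp

lemma isHom_iff' (f : MPoly k 3) (m : ℕ) :
    f.IsHomogeneous m ↔ ∀ d, coeff d f ≠ 0 → d 0 + d 1 + d 2 = m := by
  constructor
  · intro h d hd; have := h hd; rwa [weight_one_eq'] at this
  · intro h d hd; rw [weight_one_eq']; exact h d hd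

lemma degree3_eq' (d : Fin 3 →₀ ℕ) : d.degree = d 0 + d 1 + d 2 := by
  rw [Finsupp.degree_eq_weight_one]; exact weight_one_eq' d

open Finsupp in
lemma memI_iff' (f : MPoly k 3) :
    f ∈ Ideal.span {(X 0 : MPoly k 3) ^ 2, X 1 ^ 3, X 2 ^ 3} ↔
      ∀ d, coeff d f ≠ 0 → (2 ≤ d 0 ∨ 3 ≤ d 1 ∨ 3 ≤ d 2) := by
  constructor
  · intro hf
    rw [Ideal.mem_span_insert] at hf
    obtain ⟨p, w, hw, rfl⟩ := hf
    rw [Ideal.mem_span_insert] at hw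
    obtain ⟨q, u, hu, rfl⟩ := hw
    rw [Ideal.mem_span_singleton] at hu
    obtain ⟨r, rfl⟩ := hu
    intro d hd
    have hX0 : (X 0 : MPoly k 3)^2 = monomial (single 0 2) 1 := by
      rw [X_pow_eq_monomial]
    have hX1 : (X 1 : MPoly k 3)^3 = monomial (single 1 3) 1 := by
      rw [X_pow_eq_monomial]
    have hX2 : (X 2 : MPoly k 3)^3 = monomial (single 2 3) 1 := by
      rw [X_pow_eq_monomial]
    simp only [coeff_add, hX0, hX1, hX2, mul_comm, coeff_mul_monomial'] at hd
    by_contra hP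
    push_neg at hP
    obtain ⟨h0, h1, h2⟩ := hP
    have n0 : ¬ single 0 2 ≤ d := by
      intro hle; have := hle 0; simp [Finsupp.single_apply] at this; omega
    have n1 : ¬ single 1 3 ≤ d := by
      intro hle; have := hle 1; simp [Finsupp.single_apply] at this; omega
    have n2 : ¬ single 2 3 ≤ d := by
      intro hle; have := hle 2; simp [Finsupp.single_apply] at this; omega
    simp [n0, n1, n2] at hd
  · intro h
    rw [as_sum f]
    apply Ideal.sum_mem
    intro d hd
    have hP := h d (by rwa [MvPolynomial.mem_support_iff] at hd)
    rcases hP with h0 | h1 | h2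
    · have hidx : (d - single 0 2) + single 0 2 = d := by
        refine ext3' ?_ ?_ ?_ <;> simp [Finsupp.single_apply] <;> omega
      have : monomial d (coeff d f) = monomial (d - single 0 2) (coeff d f) * X 0 ^ 2 := by
        rw [X_pow_eq_monomial, monomial_mul, mul_one, hidx]
      rw [this]
      exact Ideal.mul_mem_left _ _ (Ideal.subset_span (by simp))
    · have hidx : (d - single 1 3) + single 1 3 = d := by
        refine ext3' ?_ ?_ ?_ <;> simp [Finsupp.single_apply] <;> omega
      have : monomial d (coeff d f) = monomial (d - single 1 3) (coeff d f) * X 1 ^ 3 := by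
        rw [X_pow_eq_monomial, monomial_mul, mul_one, hidx]
      rw [this]
      exact Ideal.mul_mem_left _ _ (Ideal.subset_span (by simp))
    · have hidx : (d - single 2 3) + single 2 3 = d := by
        refine ext3' ?_ ?_ ?_ <;> simp [Finsupp.single_apply] <;> omega
      have : monomial d (coeff d f) = monomial (d - single 2 3) (coeff d f) * X 2 ^ 3 := by
        rw [X_pow_eq_monomial, monomial_mul, mul_one, hidx]
      rw [this]
      exact Ideal.mul_mem_left _ _ (Ideal.subset_span (by simp))

open Finsupp in
lemma deg1_cases' (d : Fin 3 →₀ ℕ) (h : d 0 + d 1 + d 2 = 1) :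
    d = single 0 1 ∨ d = single 1 1 ∨ d = single 2 1 := by
  have hd := d_decomp' d
  set a := d 0; set b := d 1; set c := d 2
  have ha : a ≤ 1 := by omega
  have hb : b ≤ 1 := by omega
  have hc : c ≤ 1 := by omega
  interval_cases a <;> interval_cases b <;> interval_cases c <;> simp_all

open Finsupp in
lemma deg2_cases' (d : Fin 3 →₀ ℕ) (h : d 0 + d 1 + d 2 = 2) :
    d = single 0 2 ∨ d = single 0 1 + single 1 1 ∨ d = single 0 1 + single 2 1 ∨
    d = single 1 2 ∨ d = single 1 1 + single 2 1 ∨ d = single 2 2 := by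
  have hd := d_decomp' d
  set a := d 0; set b := d 1; set c := d 2
  have ha : a ≤ 2 := by omega
  have hb : b ≤ 2 := by omega
  have hc : c ≤ 2 := by omega
  interval_cases a <;> interval_cases b <;> interval_cases c <;> simp_all

open Finsupp in
lemma deg3_cases' (d : Fin 3 →₀ ℕ) (h : d 0 + d 1 + d 2 = 3) :
    d = single 0 3 ∨ d = single 0 2 + single 1 1 ∨ d = single 0 2 + single 2 1 ∨
    d = single 0 1 + single 1 2 ∨ d = single 0 1 + single 1 1 + single 2 1 ∨
    d = single 0 1 + single 2 2 ∨ d = single 1 3 ∨ d = single 1 2 + single 2 1 ∨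
    d = single 1 1 + single 2 2 ∨ d = single 2 3 := by
  have hd := d_decomp' d
  set a := d 0; set b := d 1; set c := d 2
  have ha : a ≤ 3 := by omega
  have hb : b ≤ 3 := by omega
  have hc : c ≤ 3 := by omega
  interval_cases a <;> interval_cases b <;> interval_cases c <;> simp_all

lemma hilb_eq' (I : Ideal (MPoly k 3))
    (hI : I = Ideal.span {(X 0 : MPoly k 3) ^ 2, X 1 ^ 3, X 2 ^ 3})
    (N m : ℕ) (D : Fin m → (Fin 3 →₀ ℕ))
    (hdeg : ∀ i, (D i) 0 + (D i) 1 + (D i) 2 = N)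
    (hinj : Function.Injective D)
    (hnP : ∀ i, ¬(2 ≤ D i 0 ∨ 3 ≤ D i 1 ∨ 3 ≤ D i 2))
    (hcover : ∀ d : Fin 3 →₀ ℕ, d 0 + d 1 + d 2 = N →
      (2 ≤ d 0 ∨ 3 ≤ d 1 ∨ 3 ≤ d 2) ∨ ∃ i, d = D i) :
    hilb I N = m := by
  classical
  set φ := Ideal.Quotient.mkₐ k I with hφ
  set w : Fin m → MPoly k 3 ⧸ I := fun i => φ (monomial (D i) 1) with hw
  have hcomp : comp I N = Submodule.span k (Set.range w) := by
    apply le_antisymm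
    · rintro x ⟨f, hf, rfl⟩
      rw [SetLike.mem_coe, mem_homogeneousSubmodule, isHom_iff'] at hf
      show φ f ∈ _
      have h1 : φ f = ∑ d ∈ f.support, φ (monomial d (coeff d f)) := by
        rw [← map_sum]; exact congrArg φ (as_sum f)
      rw [h1]
      apply Submodule.sum_mem
      intro d hd
      rcases hcover d (hf d (by rwa [MvPolynomial.mem_support_iff] at hd)) with hP | ⟨i, rfl⟩
      · have : monomial d (coeff d f) ∈ I := by
          rw [hI, memI_iff']
          intro e he
          rw [coeff_monomial] at he
          have hde : d = e := by by_contra hne; rw [if_neg hne] at he; exact he rfl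
          subst hde; exact hP
        have : φ ((monomial d) (coeff d f)) = 0 := by
          rw [hφ, Ideal.Quotient.mkₐ_eq_mk, Ideal.Quotient.eq_zero_iff_mem]; exact this
        rw [this]
        exact Submodule.zero_mem _
      · have : (monomial (D i)) (coeff (D i) f) = (coeff (D i) f) • monomial (D i) (1:k) := by
          rw [smul_monomial, smul_eq_mul, mul_one]
        rw [this, map_smul]
        exact Submodule.smul_mem _ _ (Submodule.subset_span ⟨i, rfl⟩)
    · rw [Submodule.span_le]
      rintro x ⟨i, rfl⟩
      exact ⟨monomial (D i) 1, by
        rw [SetLike.mem_coe, mem_homogeneousSubmodule]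
        exact isHomogeneous_monomial _ (by rw [degree3_eq']; exact hdeg i), rfl⟩
  have hli : LinearIndependent k w := by
    rw [Fintype.linearIndependent_iff]
    intro g hg
    have : φ (∑ i, monomial (D i) (g i)) = 0 := by
      rw [map_sum, ← hg]
      congr 1; ext i
      rw [hw]
      rw [← map_smul]
      congr 1
      rw [smul_monomial, smul_eq_mul, mul_one]
    rw [hφ, Ideal.Quotient.mkₐ_eq_mk, Ideal.Quotient.eq_zero_iff_mem, hI, memI_iff'] at this
    intro j
    by_contra hgj
    have hcoeff : coeff (D j) (∑ i, monomial (D i) (g i)) = g j := by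
      rw [coeff_sum]
      rw [Finset.sum_eq_single j]
      · simp [coeff_monomial]
      · intro i _ hij
        rw [coeff_monomial, if_neg (fun h => hij (hinj h))]
      · simp
    exact hnP j (this (D j) (by rw [hcoeff]; exact hgj))
  rw [hilb, hcomp, finrank_span_eq_card hli, Fintype.card_fin]

open Finsupp in
noncomputable def D2' : Fin 5 → (Fin 3 →₀ ℕ) :=
  ![single 0 1 + single 1 1, single 0 1 + single 2 1, single 1 2,
    single 1 1 + single 2 1, single 2 2]

open Finsupp in
noncomputable def D3' : Fin 5 → (Fin 3 →₀ ℕ) :=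
  ![single 0 1 + single 1 2, single 0 1 + single 1 1 + single 2 1, single 0 1 + single 2 2,
    single 1 2 + single 2 1, single 1 1 + single 2 2]

lemma D2_deg' : ∀ i, (D2' i) 0 + (D2' i) 1 + (D2' i) 2 = 2 := by
  intro i; fin_cases i <;> simp [D2', Finsupp.single_apply]

lemma D2_inj' : Function.Injective D2' := by
  intro i j h
  fin_cases i <;> fin_cases j <;> first
    | rfl
    | (exfalso
       have h0 := DFunLike.congr_fun h 0
       have h1 := DFunLike.congr_fun h 1
       have h2 := DFunLike.congr_fun h 2
       simp [D2', Finsupp.single_apply] at h0 h1 h2)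

lemma D2_nP' : ∀ i, ¬(2 ≤ D2' i 0 ∨ 3 ≤ D2' i 1 ∨ 3 ≤ D2' i 2) := by
  intro i; fin_cases i <;> simp [D2', Finsupp.single_apply]

lemma D2_cover' : ∀ d : Fin 3 →₀ ℕ, d 0 + d 1 + d 2 = 2 →
    (2 ≤ d 0 ∨ 3 ≤ d 1 ∨ 3 ≤ d 2) ∨ ∃ i, d = D2' i := by
  intro d h
  rcases deg2_cases' d h with h'|h'|h'|h'|h'|h'
  · exact Or.inl (by subst h'; simp [Finsupp.single_apply])
  · exact Or.inr ⟨0, by simp [D2', h']⟩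
  · exact Or.inr ⟨1, by simp [D2', h']⟩
  · exact Or.inr ⟨2, by simp [D2', h']⟩
  · exact Or.inr ⟨3, by simp [D2', h']⟩
  · exact Or.inr ⟨4, by simp [D2', h']⟩

lemma D3_deg' : ∀ i, (D3' i) 0 + (D3' i) 1 + (D3' i) 2 = 3 := by
  intro i; fin_cases i <;> simp [D3', Finsupp.single_apply]

lemma D3_inj' : Function.Injective D3' := by
  intro i j h
  fin_cases i <;> fin_cases j <;> first
    | rfl
    | (exfalso
       have h0 := DFunLike.congr_fun h 0
       have h1 := DFunLike.congr_fun h 1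
       have h2 := DFunLike.congr_fun h 2
       simp [D3', Finsupp.single_apply] at h0 h1 h2)

lemma D3_nP' : ∀ i, ¬(2 ≤ D3' i 0 ∨ 3 ≤ D3' i 1 ∨ 3 ≤ D3' i 2) := by
  intro i; fin_cases i <;> simp [D3', Finsupp.single_apply]

lemma D3_cover' : ∀ d : Fin 3 →₀ ℕ, d 0 + d 1 + d 2 = 3 →
    (2 ≤ d 0 ∨ 3 ≤ d 1 ∨ 3 ≤ d 2) ∨ ∃ i, d = D3' i := by
  intro d h
  rcases deg3_cases' d h with h'|h'|h'|h'|h'|h'|h'|h'|h'|h'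
  · exact Or.inl (by subst h'; simp [Finsupp.single_apply])
  · exact Or.inl (by subst h'; simp [Finsupp.single_apply])
  · exact Or.inl (by subst h'; simp [Finsupp.single_apply])
  · exact Or.inr ⟨0, by simp [D3', h']⟩
  · exact Or.inr ⟨1, by simp [D3', h']⟩
  · exact Or.inr ⟨2, by simp [D3', h']⟩
  · exact Or.inl (by subst h'; simp [Finsupp.single_apply])
  · exact Or.inr ⟨3, by simp [D3', h']⟩
  · exact Or.inr ⟨4, by simp [D3', h']⟩
  · exact Or.inl (by subst h'; simp [Finsupp.single_apply])

open Finsupp in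
lemma homog1_decomp' (L : MPoly k 3) (hL : L.IsHomogeneous 1) :
    L = C (coeff (single 0 1) L) * X 0 + C (coeff (single 1 1) L) * X 1
      + C (coeff (single 2 1) L) * X 2 := by
  rw [isHom_iff'] at hL
  apply MvPolynomial.ext
  intro d
  by_cases h0 : d = single 0 1
  · subst h0
    simp [coeff_C_mul, coeff_X', Finsupp.single_eq_single_iff]
  by_cases h1 : d = single 1 1
  · subst h1
    simp [coeff_C_mul, coeff_X', Finsupp.single_eq_single_iff]
  by_cases h2 : d = single 2 1
  · subst h2
    simp [coeff_C_mul, coeff_X', Finsupp.single_eq_single_iff]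
  · have hdL : coeff d L = 0 := by
      by_contra hne
      rcases deg1_cases' d (hL d hne) with h | h | h <;> tauto
    rw [hdL]
    simp only [coeff_add, coeff_C_mul, coeff_X']
    rw [if_neg (fun h => h0 h.symm), if_neg (fun h => h1 h.symm), if_neg (fun h => h2 h.symm)]
    ring

open Finsupp in
lemma sq_mem_imp' (L : MPoly k 3) (hL : L.IsHomogeneous 1)
    (hmem : L * L ∈ Ideal.span {(X 0 : MPoly k 3) ^ 2, X 1 ^ 3, X 2 ^ 3}) :
    coeff (single 1 1) L = 0 ∧ coeff (single 2 1) L = 0 := by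
  set a := coeff (single 0 1) L
  set b := coeff (single 1 1) L
  set c := coeff (single 2 1) L
  have hsq : L * L = C (coeff (single 0 2) (L*L)) * X 0 ^ 2 := by
    have hhom : (L*L).IsHomogeneous 2 := hL.mul hL
    rw [isHom_iff'] at hhom
    rw [memI_iff'] at hmem
    rw [C_mul_X_pow_eq_monomial]
    apply MvPolynomial.ext
    intro d
    by_cases hd : d = single 0 2
    · subst hd; rw [coeff_monomial, if_pos rfl]
    · rw [coeff_monomial, if_neg (fun h => hd h.symm)]
      by_contra hne
      have hdeg := hhom d hne
      have hP := hmem d hne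
      rcases deg2_cases' d hdeg with h | h | h | h | h | h
      · exact hd h
      all_goals (subst h; simp [Finsupp.single_apply] at hP)
  have hLd : L = C a * X 0 + C b * X 1 + C c * X 2 := homog1_decomp' L hL
  constructor
  · have := congrArg (eval (fun i : Fin 3 => if i = 1 then (1:k) else 0)) hsq
    rw [hLd] at this
    simp [eval_mul, eval_add, eval_C, eval_X, eval_pow] at this
    exact this
  · have := congrArg (eval (fun i : Fin 3 => if i = 2 then (1:k) else 0)) hsq
    rw [hLd] at this
    simp [eval_mul, eval_add, eval_C, eval_X, eval_pow] at this
    exact this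

open Finsupp in
lemma lef' (k : Type) [Field k] [CharP k 3]
    (I : Ideal (MPoly k 3))
    (hI : I = Ideal.span {(X 0 : MPoly k 3) ^ 2, X 1 ^ 3, X 2 ^ 3}) :
    ∀ L : MPoly k 3, L.IsHomogeneous 1 →
      ∃ f : MPoly k 3, f.IsHomogeneous 2 ∧ f ∉ I ∧ L * f ∈ I := by
  intro L hL
  subst hI
  set a := coeff (single 0 1) L
  set b := coeff (single 1 1) L
  set c := coeff (single 2 1) L
  have hLd : L = C a * X 0 + C b * X 1 + C c * X 2 := homog1_decomp' L hL
  by_cases hbc : b = 0 ∧ c = 0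
  · refine ⟨X 0 * X 1, (isHomogeneous_X _ _).mul (isHomogeneous_X _ _), ?_, ?_⟩
    · rw [memI_iff']
      push_neg
      refine ⟨single 0 1 + single 1 1, ?_, ?_, ?_, ?_⟩
      · have : (X 0 * X 1 : MPoly k 3) = monomial (single 0 1 + single 1 1) 1 := by
          rw [X, X, monomial_mul, one_mul]
        rw [this, coeff_monomial, if_pos rfl]
        exact one_ne_zero
      · simp [Finsupp.single_apply]
      · simp [Finsupp.single_apply]
      · simp [Finsupp.single_apply]
    · have : L * (X 0 * X 1) = (C a * X 1) * X 0 ^ 2 := by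
        rw [hLd, hbc.1, hbc.2, map_zero]; ring
      rw [this]
      exact Ideal.mul_mem_left _ _ (Ideal.subset_span (by simp))
  · refine ⟨L * L, hL.mul hL, ?_, ?_⟩
    · intro hmem
      exact hbc ⟨(sq_mem_imp' L hL hmem).1, (sq_mem_imp' L hL hmem).2⟩
    · have h3 : Fact (Nat.Prime 3) := ⟨by norm_num⟩
      have : L * (L * L) = L ^ 3 := by ring
      rw [this, hLd]
      rw [add_pow_char (p := 3), add_pow_char (p := 3)]
      have e0 : (C a * X 0 : MPoly k 3) ^ 3 = (C a ^ 3 * X 0) * X 0 ^ 2 := by ring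
      have e1 : (C b * X 1 : MPoly k 3) ^ 3 = C b ^ 3 * X 1 ^ 3 := by ring
      have e2 : (C c * X 2 : MPoly k 3) ^ 3 = C c ^ 3 * X 2 ^ 3 := by ring
      rw [e0, e1, e2]
      refine Ideal.add_mem _ (Ideal.add_mem _ ?_ ?_) ?_
      · exact Ideal.mul_mem_left _ _ (Ideal.subset_span (by simp))
      · exact Ideal.mul_mem_left _ _ (Ideal.subset_span (by simp))
      · exact Ideal.mul_mem_left _ _ (Ideal.subset_span (by simp))

theorem stmt4 (k : Type) [Field k] [CharP k 3]
    (I : Ideal (MPoly k 3))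
    (hI : I = Ideal.span {(X 0 : MPoly k 3) ^ 2, X 1 ^ 3, X 2 ^ 3}) :
    hilb I 2 = 5 ∧ hilb I 3 = 5 ∧
    ∀ L : MPoly k 3, L.IsHomogeneous 1 →
      ∃ f : MPoly k 3, f.IsHomogeneous 2 ∧ f ∉ I ∧ L * f ∈ I := by
  refine ⟨hilb_eq' I hI 2 5 D2' D2_deg' D2_inj' D2_nP' D2_cover',
    hilb_eq' I hI 3 5 D3' D3_deg' D3_inj' D3_nP' D3_cover',
    lef' k I hI⟩
end

section
/- Let k have characteristic ≠ 3 and let H be a pencil of plane cubics containing xyz whose base locus is a reduced Hesse configuration (9 reduced points such that each line through 2 of them contains a third). Then H = ⟨a x³ + b y³ + c z³, xyz⟩ for some nonzero constants a,b,c ∈ k. -/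
open MvPolynomial

namespace Stmt16Aux

/-- exponent vector -/
noncomputable def e3 (a b c : ℕ) : Fin 3 →₀ ℕ := Finsupp.equivFunOnFinite.symm ![a, b, c]

lemma e3_apply (a b c : ℕ) (i : Fin 3) : e3 a b c i = ![a, b, c] i := rfl

lemma e3_inj {a b c a' b' c' : ℕ} : e3 a b c = e3 a' b' c' ↔ (a = a' ∧ b = b' ∧ c = c') := by
  constructor
  · intro h
    refine ⟨?_, ?_, ?_⟩
    · have := congrFun (congrArg (fun d : Fin 3 →₀ ℕ => (d : Fin 3 → ℕ)) h) 0
      simpa [e3_apply] using this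
    · have := congrFun (congrArg (fun d : Fin 3 →₀ ℕ => (d : Fin 3 → ℕ)) h) 1
      simpa [e3_apply] using this
    · have := congrFun (congrArg (fun d : Fin 3 →₀ ℕ => (d : Fin 3 → ℕ)) h) 2
      simpa [e3_apply] using this
  · rintro ⟨rfl, rfl, rfl⟩; rfl

lemma d_eq_e3 (d : Fin 3 →₀ ℕ) : d = e3 (d 0) (d 1) (d 2) := by
  ext i
  rw [e3_apply]
  fin_cases i <;> simp

lemma e3_degree (a b c : ℕ) : (e3 a b c).degree = a + b + c := by
  rw [Finsupp.degree_apply, Finset.sum_subset (Finset.subset_univ _)]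
  · rw [Fin.sum_univ_three]
    simp [e3_apply]
  · intro x _ hx
    simpa using (Finsupp.notMem_support_iff.1 hx)

lemma X_pow_e3 {k : Type} [CommSemiring k] (a b c : ℕ) :
    (X 0 ^ a * X 1 ^ b * X 2 ^ c : MvPolynomial (Fin 3) k) = monomial (e3 a b c) 1 := by
  have h : (Finsupp.single 0 a + Finsupp.single 1 b + Finsupp.single 2 c : Fin 3 →₀ ℕ)
      = e3 a b c := by
    ext i
    rw [e3_apply]
    fin_cases i <;> simp [Finsupp.single_apply]
  rw [X_pow_eq_monomial, X_pow_eq_monomial, X_pow_eq_monomial, monomial_mul, monomial_mul, h,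
    one_mul, one_mul]

lemma expansion {k : Type} [Field k] (c : MvPolynomial (Fin 3) k) (hc : c.IsHomogeneous 3) :
    c = C (coeff (e3 3 0 0) c) * X 0 ^ 3 + C (coeff (e3 2 1 0) c) * (X 0 ^ 2 * X 1 ^ 1)
      + C (coeff (e3 2 0 1) c) * (X 0 ^ 2 * X 1 ^ 0 * X 2 ^ 1)
      + C (coeff (e3 1 2 0) c) * (X 0 ^ 1 * X 1 ^ 2)
      + C (coeff (e3 1 0 2) c) * (X 0 ^ 1 * X 1 ^ 0 * X 2 ^ 2)
      + C (coeff (e3 1 1 1) c) * (X 0 ^ 1 * X 1 ^ 1 * X 2 ^ 1)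
      + C (coeff (e3 0 3 0) c) * X 1 ^ 3
      + C (coeff (e3 0 2 1) c) * (X 0 ^ 0 * X 1 ^ 2 * X 2 ^ 1)
      + C (coeff (e3 0 1 2) c) * (X 0 ^ 0 * X 1 ^ 1 * X 2 ^ 2)
      + C (coeff (e3 0 0 3) c) * X 2 ^ 3 := by
  have hX3a : (X 0 ^ 3 : MvPolynomial (Fin 3) k) = X 0 ^ 3 * X 1 ^ 0 * X 2 ^ 0 := by ring
  have hX3b : (X 1 ^ 3 : MvPolynomial (Fin 3) k) = X 0 ^ 0 * X 1 ^ 3 * X 2 ^ 0 := by ring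
  have hX3c : (X 2 ^ 3 : MvPolynomial (Fin 3) k) = X 0 ^ 0 * X 1 ^ 0 * X 2 ^ 3 := by ring
  have hX2a : (X 0 ^ 2 * X 1 ^ 1 : MvPolynomial (Fin 3) k) = X 0 ^ 2 * X 1 ^ 1 * X 2 ^ 0 := by
    ring
  have hX2b : (X 0 ^ 1 * X 1 ^ 2 : MvPolynomial (Fin 3) k) = X 0 ^ 1 * X 1 ^ 2 * X 2 ^ 0 := by
    ring
  rw [hX3a, hX3b, hX3c, hX2a, hX2b]
  rw [X_pow_e3, X_pow_e3, X_pow_e3, X_pow_e3, X_pow_e3, X_pow_e3, X_pow_e3, X_pow_e3, X_pow_e3,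
    X_pow_e3]
  apply MvPolynomial.ext
  intro d
  obtain ⟨a, b, cc, rfl⟩ : ∃ a b cc, d = e3 a b cc := ⟨d 0, d 1, d 2, d_eq_e3 d⟩
  simp only [coeff_add, coeff_C_mul, coeff_monomial, e3_inj, mul_ite, mul_one, mul_zero]
  by_cases hs : a + b + cc = 3
  · have ha : a ≤ 3 := by omega
    have hb : b ≤ 3 := by omega
    have hc3 : cc ≤ 3 := by omega
    interval_cases a <;> interval_cases b <;> interval_cases cc <;>
      first
        | (exfalso; omega)
        | norm_num
  · have h0 : coeff (e3 a b cc) c = 0 := by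
      apply hc.coeff_eq_zero
      rw [e3_degree]
      exact hs
    rw [h0, if_neg (by omega), if_neg (by omega), if_neg (by omega), if_neg (by omega),
      if_neg (by omega), if_neg (by omega), if_neg (by omega), if_neg (by omega),
      if_neg (by omega), if_neg (by omega)]
    norm_num

lemma eval_cubic {k : Type} [Field k] (c : MvPolynomial (Fin 3) k) (hc : c.IsHomogeneous 3)
    (v : Fin 3 → k) :
    eval v c = coeff (e3 3 0 0) c * v 0 ^ 3 + coeff (e3 2 1 0) c * (v 0 ^ 2 * v 1)
      + coeff (e3 2 0 1) c * (v 0 ^ 2 * v 2)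
      + coeff (e3 1 2 0) c * (v 0 * v 1 ^ 2)
      + coeff (e3 1 0 2) c * (v 0 * v 2 ^ 2)
      + coeff (e3 1 1 1) c * (v 0 * v 1 * v 2)
      + coeff (e3 0 3 0) c * v 1 ^ 3
      + coeff (e3 0 2 1) c * (v 1 ^ 2 * v 2)
      + coeff (e3 0 1 2) c * (v 1 * v 2 ^ 2)
      + coeff (e3 0 0 3) c * v 2 ^ 3 := by
  conv_lhs => rw [expansion c hc]
  simp only [map_add, map_mul, map_pow, eval_C, eval_X]
  ring

variable {k : Type} [Field k]

lemma pt_eq (p q : Projectivization k (Fin 3 → k)) (s : k) (hs : s ≠ 0)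
    (h : q.rep = s • p.rep) : q = p := by
  rw [← Projectivization.mk_rep p, ← Projectivization.mk_rep q]
  rw [Projectivization.mk_eq_mk_iff]
  exact ⟨Units.mk0 s hs, h.symm⟩

lemma rep_mk (v : Fin 3 → k) (hv : v ≠ 0) :
    ∃ s : k, s ≠ 0 ∧ (Projectivization.mk k v hv).rep = s • v := by
  obtain ⟨a, ha⟩ := (Projectivization.mk_eq_mk_iff k _ _
      (Projectivization.rep_nonzero _) hv).1 (by rw [Projectivization.mk_rep])
  refine ⟨(a : k), a.ne_zero, ?_⟩
  rw [← ha, Units.smul_def]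

lemma ratio_injOn (u w : Fin 3) (W : Set (Projectivization k (Fin 3 → k)))
    (hW : ∀ p ∈ W, (∀ i, i ≠ u → i ≠ w → p.rep i = 0) ∧ p.rep u ≠ 0) :
    Set.InjOn (fun p : Projectivization k (Fin 3 → k) => p.rep w / p.rep u) W := by
  intro p hpW q hqW he
  simp only at he
  obtain ⟨hpz, hpu⟩ := hW p hpW
  obtain ⟨hqz, hqu⟩ := hW q hqW
  apply pt_eq q p (p.rep u / q.rep u) (div_ne_zero hpu hqu)
  funext i
  by_cases hiu : i = u
  · subst hiu
    simp only [Pi.smul_apply, smul_eq_mul]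
    field_simp
  · by_cases hiw : i = w
    · subst hiw
      simp only [Pi.smul_apply, smul_eq_mul]
      rw [div_eq_div_iff hpu hqu] at he
      field_simp
      linear_combination he
    · simp [hpz i hiu hiw, hqz i hiu hiw]

lemma span_eval_zero (v : Fin 3 → k) (f g h : MvPolynomial (Fin 3) k)
    (hf : f ∈ Submodule.span k ({g, h} : Set (MvPolynomial (Fin 3) k)))
    (hg : eval v g = 0) (hh : eval v h = 0) : eval v f = 0 := by
  obtain ⟨a, b, hab⟩ := Submodule.mem_span_pair.1 hf
  rw [← hab]
  rw [smul_eq_C_mul, smul_eq_C_mul]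
  simp [hg, hh]

lemma coeff_vanish (A E G B : k) (T : Set k) (h3 : T.ncard = 3)
    (hroot : ∀ t ∈ T, A + E * t + G * t ^ 2 + B * t ^ 3 = 0)
    (hcube : ∀ t ∈ T, ∀ t' ∈ T, t ^ 3 = t' ^ 3) :
    E = 0 ∧ G = 0 := by
  obtain ⟨t1, t2, t3, h12, h13, h23, rfl⟩ := Set.ncard_eq_three.1 h3
  have m1 : t1 ∈ ({t1, t2, t3} : Set k) := by simp
  have m2 : t2 ∈ ({t1, t2, t3} : Set k) := by simp
  have m3 : t3 ∈ ({t1, t2, t3} : Set k) := by simp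
  have r1 := hroot t1 m1
  have r2 := hroot t2 m2
  have r3 := hroot t3 m3
  have c21 : t2 ^ 3 = t1 ^ 3 := hcube t2 m2 t1 m1
  have c31 : t3 ^ 3 = t1 ^ 3 := hcube t3 m3 t1 m1
  have h12' : E + G * (t1 + t2) = 0 := by
    apply mul_left_cancel₀ (sub_ne_zero_of_ne h12)
    rw [mul_zero]
    linear_combination r1 - r2 + B * c21
  have h13' : E + G * (t1 + t3) = 0 := by
    apply mul_left_cancel₀ (sub_ne_zero_of_ne h13)
    rw [mul_zero]
    linear_combination r1 - r3 + B * c31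
  have hG : G = 0 := by
    apply mul_left_cancel₀ (sub_ne_zero_of_ne h23)
    rw [mul_zero]
    linear_combination h12' - h13'
  refine ⟨?_, hG⟩
  linear_combination h12' - (t1 + t2) * hG

lemma root_of_rel (b0 b1 b2 b3 x y : k) (hx : x ≠ 0)
    (hrel : b0 * x ^ 3 + b1 * (x ^ 2 * y) + b2 * (x * y ^ 2) + b3 * y ^ 3 = 0) :
    b0 + b1 * (y / x) + b2 * (y / x) ^ 2 + b3 * (y / x) ^ 3 = 0 := by
  have hq : b0 + b1 * (y / x) + b2 * (y / x) ^ 2 + b3 * (y / x) ^ 3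
      = (b0 * x ^ 3 + b1 * (x ^ 2 * y) + b2 * (x * y ^ 2) + b3 * y ^ 3) / x ^ 3 := by
    field_simp
  rw [hq, hrel, zero_div]

lemma rootset3 (a0 a1 a2 a3 : k) (h : ¬(a0 = 0 ∧ a1 = 0 ∧ a2 = 0 ∧ a3 = 0)) :
    {t : k | a0 + a1 * t + a2 * t ^ 2 + a3 * t ^ 3 = 0}.Finite ∧
    {t : k | a0 + a1 * t + a2 * t ^ 2 + a3 * t ^ 3 = 0}.ncard ≤ 3 := by
  classical
  set P : Polynomial k := Polynomial.C a3 * Polynomial.X ^ 3 + Polynomial.C a2 * Polynomial.X ^ 2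
    + Polynomial.C a1 * Polynomial.X + Polynomial.C a0 with hP
  have hPne : P ≠ 0 := by
    intro h0
    apply h
    refine ⟨?_, ?_, ?_, ?_⟩
    · have := congrArg (Polynomial.coeff · 0) h0; simpa [hP] using this
    · have := congrArg (Polynomial.coeff · 1) h0; simpa [hP] using this
    · have := congrArg (Polynomial.coeff · 2) h0; simpa [hP] using this
    · have := congrArg (Polynomial.coeff · 3) h0; simpa [hP] using this
  have hsub : {t : k | a0 + a1 * t + a2 * t ^ 2 + a3 * t ^ 3 = 0} ⊆ ↑P.roots.toFinset := by
    intro t ht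
    simp only [Set.mem_setOf_eq] at ht
    simp only [Finset.coe_sort_coe, Multiset.mem_toFinset, Finset.mem_coe]
    rw [Polynomial.mem_roots hPne]
    simp only [Polynomial.IsRoot, hP, Polynomial.eval_add, Polynomial.eval_mul,
      Polynomial.eval_pow, Polynomial.eval_C, Polynomial.eval_X]
    linear_combination ht
  refine ⟨Set.Finite.subset (Set.toFinite _) hsub, ?_⟩
  calc {t : k | a0 + a1 * t + a2 * t ^ 2 + a3 * t ^ 3 = 0}.ncard
      ≤ (↑P.roots.toFinset : Set k).ncard := Set.ncard_le_ncard hsub (Set.toFinite _)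
    _ = P.roots.toFinset.card := Set.ncard_coe_finset _
    _ ≤ Multiset.card P.roots := Multiset.toFinset_card_le _
    _ ≤ P.natDegree := Polynomial.card_roots' P
    _ ≤ 3 := Polynomial.natDegree_cubic_le

lemma rootset2 (a0 a1 a2 : k) (h : ¬(a0 = 0 ∧ a1 = 0 ∧ a2 = 0)) :
    {t : k | a0 + a1 * t + a2 * t ^ 2 = 0}.Finite ∧
    {t : k | a0 + a1 * t + a2 * t ^ 2 = 0}.ncard ≤ 2 := by
  classical
  set P : Polynomial k := Polynomial.C a2 * Polynomial.X ^ 2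
    + Polynomial.C a1 * Polynomial.X + Polynomial.C a0 with hP
  have hPne : P ≠ 0 := by
    intro h0
    apply h
    refine ⟨?_, ?_, ?_⟩
    · have := congrArg (Polynomial.coeff · 0) h0; simpa [hP] using this
    · have := congrArg (Polynomial.coeff · 1) h0; simpa [hP] using this
    · have := congrArg (Polynomial.coeff · 2) h0; simpa [hP] using this
  have hsub : {t : k | a0 + a1 * t + a2 * t ^ 2 = 0} ⊆ ↑P.roots.toFinset := by
    intro t ht
    simp only [Set.mem_setOf_eq] at ht
    simp only [Finset.coe_sort_coe, Multiset.mem_toFinset, Finset.mem_coe]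
    rw [Polynomial.mem_roots hPne]
    simp only [Polynomial.IsRoot, hP, Polynomial.eval_add, Polynomial.eval_mul,
      Polynomial.eval_pow, Polynomial.eval_C, Polynomial.eval_X]
    linear_combination ht
  refine ⟨Set.Finite.subset (Set.toFinite _) hsub, ?_⟩
  calc {t : k | a0 + a1 * t + a2 * t ^ 2 = 0}.ncard
      ≤ (↑P.roots.toFinset : Set k).ncard := Set.ncard_le_ncard hsub (Set.toFinite _)
    _ = P.roots.toFinset.card := Set.ncard_coe_finset _
    _ ≤ Multiset.card P.roots := Multiset.toFinset_card_le _
    _ ≤ P.natDegree := Polynomial.card_roots' P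
    _ ≤ 2 := Polynomial.natDegree_quadratic_le

lemma rep_w_ne_zero (p : Projectivization k (Fin 3 → k)) (u w : Fin 3)
    (hz : ∀ i, i ≠ u → i ≠ w → p.rep i = 0) (hu : p.rep u = 0) : p.rep w ≠ 0 := by
  intro hw
  apply p.rep_nonzero
  funext i
  by_cases hiu : i = u
  · simpa [hiu] using hu
  · by_cases hiw : i = w
    · simpa [hiw] using hw
    · simpa using hz i hiu hiw

lemma proj_line_card (b0 b1 b2 b3 : k) (hb : ¬(b0 = 0 ∧ b1 = 0 ∧ b2 = 0 ∧ b3 = 0))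
    (u w : Fin 3) (huw : u ≠ w) (W : Set (Projectivization k (Fin 3 → k)))
    (hW : ∀ p ∈ W, (∀ i, i ≠ u → i ≠ w → p.rep i = 0) ∧
      b0 * p.rep u ^ 3 + b1 * (p.rep u ^ 2 * p.rep w) + b2 * (p.rep u * p.rep w ^ 2)
        + b3 * p.rep w ^ 3 = 0) :
    W.ncard ≤ 3 := by
  classical
  set W1 : Set (Projectivization k (Fin 3 → k)) := {p | p ∈ W ∧ p.rep u ≠ 0} with hW1
  set W2 : Set (Projectivization k (Fin 3 → k)) := {p | p ∈ W ∧ p.rep u = 0} with hW2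
  have hsplit : W = W1 ∪ W2 := by
    ext p
    simp only [hW1, hW2, Set.mem_union, Set.mem_setOf_eq]
    tauto
  -- W2 is a subsingleton
  have hW2sub : ∀ p ∈ W2, ∀ q ∈ W2, q = p := by
    rintro p ⟨hpW, hpu⟩ q ⟨hqW, hqu⟩
    have hpz := (hW p hpW).1
    have hqz := (hW q hqW).1
    have hpw : p.rep w ≠ 0 := rep_w_ne_zero p u w hpz hpu
    have hqw : q.rep w ≠ 0 := rep_w_ne_zero q u w hqz hqu
    apply pt_eq p q (q.rep w / p.rep w) (div_ne_zero hqw hpw)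
    funext i
    by_cases hiu : i = u
    · subst hiu; simp [hpu, hqu]
    · by_cases hiw : i = w
      · subst hiw
        simp only [Pi.smul_apply, smul_eq_mul]
        field_simp
      · simp [hpz i hiu hiw, hqz i hiu hiw]
  have hW2s : W2.Subsingleton := fun p hp q hq => (hW2sub q hq p hp)
  have hW2card : W2.ncard ≤ 1 :=
    (Set.ncard_le_one hW2s.finite).2 (fun a ha b hb => hW2sub b hb a ha)
  have hinj : Set.InjOn (fun p : Projectivization k (Fin 3 → k) => p.rep w / p.rep u) W1 := by
    rintro p ⟨hpW, hpu⟩ q ⟨hqW, hqu⟩ he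
    simp only at he
    have hpz := (hW p hpW).1
    have hqz := (hW q hqW).1
    apply pt_eq q p (p.rep u / q.rep u) (div_ne_zero hpu hqu)
    funext i
    by_cases hiu : i = u
    · subst hiu
      simp only [Pi.smul_apply, smul_eq_mul]
      field_simp
    · by_cases hiw : i = w
      · subst hiw
        simp only [Pi.smul_apply, smul_eq_mul]
        rw [div_eq_div_iff hpu hqu] at he
        field_simp
        linear_combination he
      · simp [hpz i hiu hiw, hqz i hiu hiw]
  by_cases hW2e : W2.Nonempty
  · obtain ⟨p0, hp0W, hp0u⟩ := hW2e
    have hp0w : p0.rep w ≠ 0 := rep_w_ne_zero p0 u w (hW p0 hp0W).1 hp0u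
    have hb3 : b3 = 0 := by
      have h0 := (hW p0 hp0W).2
      rw [hp0u] at h0
      have : b3 * p0.rep w ^ 3 = 0 := by linear_combination h0
      rcases mul_eq_zero.1 this with h | h
      · exact h
      · exact absurd (pow_eq_zero_iff (by norm_num)|>.1 h) hp0w
    have hb' : ¬(b0 = 0 ∧ b1 = 0 ∧ b2 = 0) := fun ⟨h0, h1, h2⟩ => hb ⟨h0, h1, h2, hb3⟩
    obtain ⟨hfin2, hcard2⟩ := rootset2 b0 b1 b2 hb'
    have himg : (fun p : Projectivization k (Fin 3 → k) => p.rep w / p.rep u) '' W1 ⊆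
        {t : k | b0 + b1 * t + b2 * t ^ 2 = 0} := by
      rintro - ⟨p, ⟨hpW, hpu⟩, rfl⟩
      have hrel := (hW p hpW).2
      simp only [Set.mem_setOf_eq]
      have hq : b0 + b1 * (p.rep w / p.rep u) + b2 * (p.rep w / p.rep u) ^ 2
          = (b0 * p.rep u ^ 2 + b1 * (p.rep u * p.rep w) + b2 * p.rep w ^ 2) / p.rep u ^ 2 := by
        field_simp
      have hn : (b0 * p.rep u ^ 2 + b1 * (p.rep u * p.rep w) + b2 * p.rep w ^ 2) * p.rep u
          = 0 := by
        linear_combination hrel - p.rep w ^ 3 * hb3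
      rcases mul_eq_zero.1 hn with h | h
      · rw [hq, h, zero_div]
      · exact absurd h hpu
    have hW1card : W1.ncard ≤ 2 := by
      rw [← Set.ncard_image_of_injOn hinj]
      exact le_trans (Set.ncard_le_ncard himg hfin2) hcard2
    calc W.ncard = (W1 ∪ W2).ncard := by rw [← hsplit]
      _ ≤ W1.ncard + W2.ncard := Set.ncard_union_le _ _
      _ ≤ 2 + 1 := add_le_add hW1card hW2card
      _ ≤ 3 := by norm_num
  · obtain ⟨hfin3, hcard3⟩ := rootset3 b0 b1 b2 b3 hb
    have himg : (fun p : Projectivization k (Fin 3 → k) => p.rep w / p.rep u) '' W1 ⊆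
        {t : k | b0 + b1 * t + b2 * t ^ 2 + b3 * t ^ 3 = 0} := by
      rintro - ⟨p, ⟨hpW, hpu⟩, rfl⟩
      have hrel := (hW p hpW).2
      simp only [Set.mem_setOf_eq]
      have hq : b0 + b1 * (p.rep w / p.rep u) + b2 * (p.rep w / p.rep u) ^ 2
            + b3 * (p.rep w / p.rep u) ^ 3
          = (b0 * p.rep u ^ 3 + b1 * (p.rep u ^ 2 * p.rep w) + b2 * (p.rep u * p.rep w ^ 2)
            + b3 * p.rep w ^ 3) / p.rep u ^ 3 := by
        field_simp
      rw [hq, hrel, zero_div]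
    have hW1card : W1.ncard ≤ 3 := by
      rw [← Set.ncard_image_of_injOn hinj]
      exact le_trans (Set.ncard_le_ncard himg hfin3) hcard3
    have : W = W1 := by
      rw [hsplit, Set.not_nonempty_iff_eq_empty.1 hW2e, Set.union_empty]
    rw [this]
    exact hW1card

/-- The key Hesse-configuration cross relation between points on two coordinate lines. -/
lemma hesse_cross (Y : Set (Projectivization k (Fin 3 → k)))
    (hzero : ∀ r ∈ Y, ∃ j, r.rep j = 0)
    (hndz : ∀ r ∈ Y, ∀ i j : Fin 3, i ≠ j → r.rep i = 0 → r.rep j ≠ 0)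
    (hhesse : ∀ p ∈ Y, ∀ q ∈ Y, p ≠ q → ∃ r ∈ Y, r ≠ p ∧ r ≠ q ∧
      r.rep ∈ Submodule.span k ({p.rep, q.rep} : Set (Fin 3 → k)))
    (a b c : Fin 3) (hab : a ≠ b) (hac : a ≠ c) (hbc : b ≠ c)
    (hcov : ∀ j : Fin 3, j = a ∨ j = b ∨ j = c)
    (p : Projectivization k (Fin 3 → k)) (hp : p ∈ Y) (hpa : p.rep a = 0)
    (q : Projectivization k (Fin 3 → k)) (hq : q ∈ Y) (hqb : q.rep b = 0) :
    ∃ r ∈ Y, r.rep c = 0 ∧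
      r.rep b / r.rep a = -((p.rep c / p.rep b) * (q.rep a / q.rep c))⁻¹ := by
  have hpb : p.rep b ≠ 0 := hndz p hp a b hab hpa
  have hpc : p.rep c ≠ 0 := hndz p hp a c hac hpa
  have hqa : q.rep a ≠ 0 := hndz q hq b a hab.symm hqb
  have hqc : q.rep c ≠ 0 := hndz q hq b c hbc hqb
  have hpq : p ≠ q := by
    intro h
    rw [h] at hpb
    exact hpb hqb
  obtain ⟨r, hrY, hrp, hrq, hrspan⟩ := hhesse p hp q hq hpq
  obtain ⟨α, β, hαβ⟩ := Submodule.mem_span_pair.1 hrspan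
  have hrep : ∀ i, r.rep i = α * p.rep i + β * q.rep i := by
    intro i
    rw [← hαβ]
    simp
  have hα : α ≠ 0 := by
    rintro rfl
    have hβ : β ≠ 0 := by
      rintro rfl
      apply r.rep_nonzero
      funext i
      simpa using hrep i
    apply hrq
    apply pt_eq q r β hβ
    funext i
    simpa using hrep i
  have hβ : β ≠ 0 := by
    rintro rfl
    apply hrp
    apply pt_eq p r α hα
    funext i
    simpa using hrep i
  have hra : r.rep a ≠ 0 := by
    rw [hrep a, hpa]
    simpa using mul_ne_zero hβ hqa
  have hrb : r.rep b ≠ 0 := by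
    rw [hrep b, hqb]
    simpa using mul_ne_zero hα hpb
  have hrc : r.rep c = 0 := by
    obtain ⟨j, hj⟩ := hzero r hrY
    rcases hcov j with rfl | rfl | rfl
    · exact absurd hj hra
    · exact absurd hj hrb
    · exact hj
  refine ⟨r, hrY, hrc, ?_⟩
  have hkey : α * p.rep c + β * q.rep c = 0 := by
    rw [← hrep c]
    exact hrc
  rw [hrep a, hrep b, hpa, hqb]
  have h1 : (α * p.rep b + β * 0) = α * p.rep b := by ring
  have h2 : (α * 0 + β * q.rep a) = β * q.rep a := by ring
  rw [h1, h2, div_mul_div_comm, inv_div, ← neg_div,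
    div_eq_div_iff (mul_ne_zero hβ hqa) (mul_ne_zero hpc hqa)]
  linear_combination (p.rep b * q.rep a) * hkey

/-- If three 3-element sets of nonzero scalars satisfy the cross relation, then all elements
of the first set have the same cube. -/
lemma cube_eq (T U V : Set k)
    (hTf : T.Finite) (hUf : U.Finite) (hVf : V.Finite)
    (hU3 : U.ncard = 3) (hV3 : V.ncard = 3)
    (hT0 : ∀ t ∈ T, t ≠ 0) (hU0 : ∀ u ∈ U, u ≠ 0)
    (hcross : ∀ t ∈ T, ∀ u ∈ U, -(t * u)⁻¹ ∈ V) :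
    ∀ t ∈ T, ∀ t' ∈ T, t ^ 3 = t' ^ 3 := by
  classical
  intro t ht t' ht'
  have htne : t ≠ 0 := hT0 t ht
  have ht'ne : t' ≠ 0 := hT0 t' ht'
  -- the map u ↦ -(t*u)⁻¹ is injective on U with image V
  have himg : ∀ s ∈ T, (fun u => -(s * u)⁻¹) '' U = V := by
    intro s hs
    have hsne : s ≠ 0 := hT0 s hs
    have hinj : Set.InjOn (fun u => -(s * u)⁻¹) U := by
      intro u1 h1 u2 h2 he
      simp only [neg_inj, inv_inj] at he
      exact mul_left_cancel₀ hsne he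
    apply Set.eq_of_subset_of_ncard_le
    · rintro - ⟨u, hu, rfl⟩
      exact hcross s hs u hu
    · rw [Set.ncard_image_of_injOn hinj, hU3, hV3]
    · exact hVf
  -- multiplication by t'/t maps U into U
  have hmap : ∀ u ∈ U, (t' / t) * u ∈ U := by
    intro u hu
    have h1 : -(t' * u)⁻¹ ∈ V := hcross t' ht' u hu
    rw [← himg t ht] at h1
    obtain ⟨u'', hu'', he⟩ := h1
    have hu''ne : u'' ≠ 0 := hU0 u'' hu''
    have hune : u ≠ 0 := hU0 u hu
    have : u'' = (t' / t) * u := by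
      simp only [neg_inj, inv_inj] at he
      field_simp
      linear_combination he
    rwa [← this]
  -- the product argument
  set F := hUf.toFinset with hF
  have hFcard : F.card = 3 := by
    rw [hF, ← Set.ncard_eq_toFinset_card U hUf]
    exact hU3
  have hrat : t' / t ≠ 0 := div_ne_zero ht'ne htne
  have hinj2 : Set.InjOn (fun u : k => (t' / t) * u) U := by
    intro u1 _ u2 _ he
    exact mul_left_cancel₀ hrat he
  have himgU : (fun u : k => (t' / t) * u) '' U = U := by
    apply Set.eq_of_subset_of_ncard_le
    · rintro - ⟨u, hu, rfl⟩
      exact hmap u hu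
    · rw [Set.ncard_image_of_injOn hinj2]
    · exact hUf
  have hFimg : F.image (fun u : k => (t' / t) * u) = F := by
    ext x
    simp only [hF, Finset.mem_image, Set.Finite.mem_toFinset]
    constructor
    · rintro ⟨u, hu, rfl⟩
      exact hmap u hu
    · intro hx
      rw [← himgU] at hx
      simpa [Set.mem_image] using hx
  have hprod : (∏ u ∈ F, u) ≠ 0 := by
    rw [Finset.prod_ne_zero_iff]
    intro u hu
    exact hU0 u (by rwa [Set.Finite.mem_toFinset] at hu)
  have hcalc : (∏ u ∈ F, ((t' / t) * u)) = ∏ u ∈ F, u := by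
    conv_rhs => rw [← hFimg]
    rw [Finset.prod_image]
    intro u1 h1 u2 h2 he
    exact hinj2 (hUf.mem_toFinset.1 (Finset.mem_coe.1 h1))
      (hUf.mem_toFinset.1 (Finset.mem_coe.1 h2)) he
  have h5 : (∏ u ∈ F, ((t' / t) * u)) = (t' / t) ^ 3 * ∏ u ∈ F, u := by
    rw [Finset.prod_mul_distrib, Finset.prod_const, hFcard]
  have h7 : (t' / t) ^ 3 = 1 := by
    have h6 : (t' / t) ^ 3 * ∏ u ∈ F, u = 1 * ∏ u ∈ F, u := by
      rw [← h5, hcalc, one_mul]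
    exact mul_right_cancel₀ hprod h6
  have h8 : t' ^ 3 = t ^ 3 := by
    rw [div_pow, div_eq_one_iff_eq (pow_ne_zero 3 htne)] at h7
    exact h7
  exact h8.symm

end Stmt16Aux

open Stmt16Aux in
set_option maxHeartbeats 1000000 in
theorem stmt16 (k : Type) [Field k] [IsAlgClosed k] (h3 : (3 : k) ≠ 0)
    (c1 c2 : MvPolynomial (Fin 3) k)
    (hc1 : c1.IsHomogeneous 3) (hc2 : c2.IsHomogeneous 3)
    (hind : LinearIndependent k ![c1, c2])
    (hxyz : (X 0 * X 1 * X 2 : MvPolynomial (Fin 3) k) ∈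
      Submodule.span k ({c1, c2} : Set (MvPolynomial (Fin 3) k)))
    (Y : Set (Projectivization k (Fin 3 → k)))
    (hY : Y = {p | eval p.rep c1 = 0 ∧ eval p.rep c2 = 0})
    (hcard : Y.ncard = 9)
    (hhesse : ∀ p ∈ Y, ∀ q ∈ Y, p ≠ q → ∃ r ∈ Y, r ≠ p ∧ r ≠ q ∧
      r.rep ∈ Submodule.span k ({p.rep, q.rep} : Set (Fin 3 → k))) :
    ∃ a b c : k, a ≠ 0 ∧ b ≠ 0 ∧ c ≠ 0 ∧
      Submodule.span k ({c1, c2} : Set (MvPolynomial (Fin 3) k)) =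
      Submodule.span k ({MvPolynomial.C a * X 0 ^ 3 + MvPolynomial.C b * X 1 ^ 3 +
        MvPolynomial.C c * X 2 ^ 3, X 0 * X 1 * X 2} : Set (MvPolynomial (Fin 3) k)) := by
  classical
  -- xyz is nonzero
  have hxyzne : (X 0 * X 1 * X 2 : MvPolynomial (Fin 3) k) ≠ 0 := by
    intro h
    have h111 : (X 0 * X 1 * X 2 : MvPolynomial (Fin 3) k) = monomial (e3 1 1 1) 1 := by
      have := X_pow_e3 (k := k) 1 1 1
      simpa using this
    rw [h111] at h
    have := congrArg (coeff (e3 1 1 1)) h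
    simp [coeff_monomial] at this
  -- find a cubic c with span {c1, c2} = span {xyz, c}
  have hmain : ∃ c : MvPolynomial (Fin 3) k, c.IsHomogeneous 3 ∧
      Submodule.span k ({c1, c2} : Set (MvPolynomial (Fin 3) k)) =
      Submodule.span k ({X 0 * X 1 * X 2, c} : Set (MvPolynomial (Fin 3) k)) := by
    obtain ⟨s₁, s₂, hs⟩ := Submodule.mem_span_pair.1 hxyz
    by_cases h2 : s₂ = 0
    · have h1 : s₁ ≠ 0 := by
        rintro rfl
        rw [h2] at hs
        simp only [zero_smul, add_zero, zero_add] at hs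
        exact hxyzne hs.symm
      refine ⟨c2, hc2, le_antisymm ?_ ?_⟩
      · rw [Submodule.span_le]
        rintro f hf
        simp only [Set.mem_insert_iff, Set.mem_singleton_iff] at hf
        rcases hf with rfl | rfl
        · have hc1e : f = s₁⁻¹ • ((s₁ • f + s₂ • c2) - s₂ • c2) := by
            rw [add_sub_cancel_right, smul_smul, inv_mul_cancel₀ h1, one_smul]
          rw [hs] at hc1e
          rw [hc1e]
          exact Submodule.smul_mem _ _ (Submodule.sub_mem _
            (Submodule.subset_span (Set.mem_insert _ _))
            (Submodule.smul_mem _ _ (Submodule.subset_span (Set.mem_insert_of_mem _ rfl))))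
        · exact Submodule.subset_span (Set.mem_insert_of_mem _ rfl)
      · rw [Submodule.span_le]
        rintro f hf
        simp only [Set.mem_insert_iff, Set.mem_singleton_iff] at hf
        rcases hf with rfl | rfl
        · exact hxyz
        · exact Submodule.subset_span (Set.mem_insert_of_mem _ rfl)
    · refine ⟨c1, hc1, le_antisymm ?_ ?_⟩
      · rw [Submodule.span_le]
        rintro f hf
        simp only [Set.mem_insert_iff, Set.mem_singleton_iff] at hf
        rcases hf with rfl | rfl
        · exact Submodule.subset_span (Set.mem_insert_of_mem _ rfl)
        · have hc2e : f = s₂⁻¹ • ((s₁ • c1 + s₂ • f) - s₁ • c1) := by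
            rw [add_sub_cancel_left, smul_smul, inv_mul_cancel₀ h2, one_smul]
          rw [hs] at hc2e
          rw [hc2e]
          exact Submodule.smul_mem _ _ (Submodule.sub_mem _
            (Submodule.subset_span (Set.mem_insert _ _))
            (Submodule.smul_mem _ _ (Submodule.subset_span (Set.mem_insert_of_mem _ rfl))))
      · rw [Submodule.span_le]
        rintro f hf
        simp only [Set.mem_insert_iff, Set.mem_singleton_iff] at hf
        rcases hf with rfl | rfl
        · exact hxyz
        · exact Submodule.subset_span (Set.mem_insert _ _)
  obtain ⟨c, hchom, hspanZ⟩ := hmain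
  -- membership in Y
  have hcZ : c ∈ Submodule.span k ({c1, c2} : Set (MvPolynomial (Fin 3) k)) := by
    rw [hspanZ]
    exact Submodule.subset_span (Set.mem_insert_of_mem _ rfl)
  have hc1Z : c1 ∈ Submodule.span k ({X 0 * X 1 * X 2, c} : Set (MvPolynomial (Fin 3) k)) := by
    rw [← hspanZ]
    exact Submodule.subset_span (Set.mem_insert _ _)
  have hc2Z : c2 ∈ Submodule.span k ({X 0 * X 1 * X 2, c} : Set (MvPolynomial (Fin 3) k)) := by
    rw [← hspanZ]
    exact Submodule.subset_span (Set.mem_insert_of_mem _ rfl)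
  have hmemY : ∀ p : Projectivization k (Fin 3 → k), p ∈ Y ↔
      (p.rep 0 * p.rep 1 * p.rep 2 = 0 ∧ eval p.rep c = 0) := by
    intro p
    rw [hY]
    simp only [Set.mem_setOf_eq]
    constructor
    · rintro ⟨h1, h2⟩
      constructor
      · have := span_eval_zero p.rep (X 0 * X 1 * X 2) c1 c2 hxyz h1 h2
        simpa using this
      · exact span_eval_zero p.rep c c1 c2 hcZ h1 h2
    · rintro ⟨h1, h2⟩
      have hxyzeval : eval p.rep (X 0 * X 1 * X 2 : MvPolynomial (Fin 3) k) = 0 := by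
        simpa using h1
      exact ⟨span_eval_zero p.rep c1 _ c hc1Z hxyzeval h2,
        span_eval_zero p.rep c2 _ c hc2Z hxyzeval h2⟩
  have hYfin : Y.Finite := Set.finite_of_ncard_ne_zero (by rw [hcard]; norm_num)
  -- coefficients of c
  set cA := coeff (e3 3 0 0) c with hcAdef
  set cE := coeff (e3 2 1 0) c with hcEdef
  set cF := coeff (e3 2 0 1) c with hcFdef
  set cG := coeff (e3 1 2 0) c with hcGdef
  set cI := coeff (e3 1 0 2) c with hcIdef
  set cM := coeff (e3 1 1 1) c with hcMdef
  set cB := coeff (e3 0 3 0) c with hcBdef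
  set cH := coeff (e3 0 2 1) c with hcHdef
  set cJ := coeff (e3 0 1 2) c with hcJdef
  set cD := coeff (e3 0 0 3) c with hcDdef
  have heval : ∀ v : Fin 3 → k, eval v c = cA * v 0 ^ 3 + cE * (v 0 ^ 2 * v 1)
      + cF * (v 0 ^ 2 * v 2) + cG * (v 0 * v 1 ^ 2) + cI * (v 0 * v 2 ^ 2)
      + cM * (v 0 * v 1 * v 2) + cB * v 1 ^ 3 + cH * (v 1 ^ 2 * v 2)
      + cJ * (v 1 * v 2 ^ 2) + cD * v 2 ^ 3 := fun v => eval_cubic c hchom v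
  -- the three coordinate lines
  set L0 : Set (Projectivization k (Fin 3 → k)) := {p | p ∈ Y ∧ p.rep 0 = 0} with hL0def
  set L1 : Set (Projectivization k (Fin 3 → k)) := {p | p ∈ Y ∧ p.rep 1 = 0} with hL1def
  set L2 : Set (Projectivization k (Fin 3 → k)) := {p | p ∈ Y ∧ p.rep 2 = 0} with hL2def
  have hL0fin : L0.Finite := hYfin.subset fun p hp => hp.1
  have hL1fin : L1.Finite := hYfin.subset fun p hp => hp.1
  have hL2fin : L2.Finite := hYfin.subset fun p hp => hp.1
  have hcover : ∀ q ∈ Y, q ∈ L0 ∨ q ∈ L1 ∨ q ∈ L2 := by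
    intro q hq
    have h := ((hmemY q).1 hq).1
    rcases mul_eq_zero.1 h with h' | h'
    · rcases mul_eq_zero.1 h' with h'' | h''
      · exact Or.inl ⟨hq, h''⟩
      · exact Or.inr (Or.inl ⟨hq, h''⟩)
    · exact Or.inr (Or.inr ⟨hq, h'⟩)
  -- the cubic relation on each line
  have hrelL2 : ∀ p ∈ L2, cA * p.rep 0 ^ 3 + cE * (p.rep 0 ^ 2 * p.rep 1)
      + cG * (p.rep 0 * p.rep 1 ^ 2) + cB * p.rep 1 ^ 3 = 0 := by
    intro p hp
    have hc0 : eval p.rep c = 0 := ((hmemY p).1 hp.1).2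
    rw [heval p.rep, hp.2] at hc0
    linear_combination hc0
  have hrelL0 : ∀ p ∈ L0, cB * p.rep 1 ^ 3 + cH * (p.rep 1 ^ 2 * p.rep 2)
      + cJ * (p.rep 1 * p.rep 2 ^ 2) + cD * p.rep 2 ^ 3 = 0 := by
    intro p hp
    have hc0 : eval p.rep c = 0 := ((hmemY p).1 hp.1).2
    rw [heval p.rep, hp.2] at hc0
    linear_combination hc0
  have hrelL1 : ∀ p ∈ L1, cD * p.rep 2 ^ 3 + cI * (p.rep 2 ^ 2 * p.rep 0)
      + cF * (p.rep 2 * p.rep 0 ^ 2) + cA * p.rep 0 ^ 3 = 0 := by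
    intro p hp
    have hc0 : eval p.rep c = 0 := ((hmemY p).1 hp.1).2
    rw [heval p.rep, hp.2] at hc0
    linear_combination hc0
  -- on each line, not all four relevant coefficients vanish
  have hnz2 : ¬(cA = 0 ∧ cE = 0 ∧ cG = 0 ∧ cB = 0) := by
    rintro ⟨hA, hE, hG, hB⟩
    have hvne : ∀ t : k, (![1, t, 0] : Fin 3 → k) ≠ 0 := by
      intro t h
      have := congrFun h 0
      simp at this
    have hfY : ∀ t : k, Projectivization.mk k ![1, t, 0] (hvne t) ∈ Y := by
      intro t
      obtain ⟨s, hs, hrep⟩ := rep_mk ![1, t, 0] (hvne t)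
      apply (hmemY _).2
      constructor
      · rw [hrep]; simp
      · rw [hrep, heval]
        simp [hA, hE, hG, hB]
    have hfinj : Function.Injective (fun t : k => Projectivization.mk k ![1, t, 0] (hvne t)) := by
      intro t t' h
      simp only at h
      rw [Projectivization.mk_eq_mk_iff] at h
      obtain ⟨a, ha⟩ := h
      have h0 := congrFun ha 0
      have h1 := congrFun ha 1
      simp [Units.smul_def] at h0 h1
      rw [h0] at h1
      simpa using h1.symm
    exact Set.infinite_of_injective_forall_mem hfinj hfY hYfin
  have hnz0 : ¬(cB = 0 ∧ cH = 0 ∧ cJ = 0 ∧ cD = 0) := by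
    rintro ⟨hB, hH, hJ, hD⟩
    have hvne : ∀ t : k, (![0, 1, t] : Fin 3 → k) ≠ 0 := by
      intro t h
      have := congrFun h 1
      simp at this
    have hfY : ∀ t : k, Projectivization.mk k ![0, 1, t] (hvne t) ∈ Y := by
      intro t
      obtain ⟨s, hs, hrep⟩ := rep_mk ![0, 1, t] (hvne t)
      apply (hmemY _).2
      constructor
      · rw [hrep]; simp
      · rw [hrep, heval]
        simp [hB, hH, hJ, hD]
    have hfinj : Function.Injective (fun t : k => Projectivization.mk k ![0, 1, t] (hvne t)) := by
      intro t t' h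
      simp only at h
      rw [Projectivization.mk_eq_mk_iff] at h
      obtain ⟨a, ha⟩ := h
      have h0 := congrFun ha 1
      have h1 := congrFun ha 2
      simp [Units.smul_def] at h0 h1
      rw [h0] at h1
      simpa using h1.symm
    exact Set.infinite_of_injective_forall_mem hfinj hfY hYfin
  have hnz1 : ¬(cD = 0 ∧ cI = 0 ∧ cF = 0 ∧ cA = 0) := by
    rintro ⟨hD, hI, hF, hA⟩
    have hvne : ∀ t : k, (![1, 0, t] : Fin 3 → k) ≠ 0 := by
      intro t h
      have := congrFun h 0
      simp at this
    have hfY : ∀ t : k, Projectivization.mk k ![1, 0, t] (hvne t) ∈ Y := by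
      intro t
      obtain ⟨s, hs, hrep⟩ := rep_mk ![1, 0, t] (hvne t)
      apply (hmemY _).2
      constructor
      · rw [hrep]; simp
      · rw [hrep, heval]
        simp [hD, hI, hF, hA]
    have hfinj : Function.Injective (fun t : k => Projectivization.mk k ![1, 0, t] (hvne t)) := by
      intro t t' h
      simp only at h
      rw [Projectivization.mk_eq_mk_iff] at h
      obtain ⟨a, ha⟩ := h
      have h0 := congrFun ha 0
      have h1 := congrFun ha 2
      simp [Units.smul_def] at h0 h1
      rw [h0] at h1
      simpa using h1.symm
    exact Set.infinite_of_injective_forall_mem hfinj hfY hYfin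
  -- each line contains at most three points
  have h2le : L2.ncard ≤ 3 := by
    apply proj_line_card cA cE cG cB hnz2 0 1 (by decide) L2
    intro p hp
    refine ⟨?_, hrelL2 p hp⟩
    intro i h0 h1
    fin_cases i
    · exact absurd rfl h0
    · exact absurd rfl h1
    · exact hp.2
  have h0le : L0.ncard ≤ 3 := by
    apply proj_line_card cB cH cJ cD hnz0 1 2 (by decide) L0
    intro p hp
    refine ⟨?_, hrelL0 p hp⟩
    intro i h0 h1
    fin_cases i
    · exact hp.2
    · exact absurd rfl h0
    · exact absurd rfl h1
  have h1le : L1.ncard ≤ 3 := by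
    apply proj_line_card cD cI cF cA hnz1 2 0 (by decide) L1
    intro p hp
    refine ⟨?_, hrelL1 p hp⟩
    intro i h2' h0'
    fin_cases i
    · exact absurd rfl h0'
    · exact hp.2
    · exact absurd rfl h2'
  -- counting
  have hle : Y.ncard ≤ L0.ncard + L1.ncard + L2.ncard := by
    calc Y.ncard ≤ ((L0 ∪ L1) ∪ L2).ncard := Set.ncard_le_ncard (fun q hq => by
          rcases hcover q hq with h | h | h
          · exact Or.inl (Or.inl h)
          · exact Or.inl (Or.inr h)
          · exact Or.inr h) ((hL0fin.union hL1fin).union hL2fin)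
      _ ≤ (L0 ∪ L1).ncard + L2.ncard := Set.ncard_union_le _ _
      _ ≤ L0.ncard + L1.ncard + L2.ncard := Nat.add_le_add_right (Set.ncard_union_le _ _) _
  rw [hcard] at hle
  have h0eq : L0.ncard = 3 := by omega
  have h1eq : L1.ncard = 3 := by omega
  have h2eq : L2.ncard = 3 := by omega
  -- no point lies on two coordinate lines
  have key : ∀ A B C : Set (Projectivization k (Fin 3 → k)), A.ncard = 3 → B.ncard = 3 →
      C.ncard = 3 → A.Finite → B.Finite → C.Finite →
      (∀ q ∈ Y, q ∈ A ∨ q ∈ B ∨ q ∈ C) → ∀ p, p ∈ A → p ∈ B → False := by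
    intro A B C hA hB hC hAf hBf hCf hcov p hpA hpB
    have hsub : Y ⊆ (A ∪ (B \ {p})) ∪ C := by
      intro q hq
      rcases hcov q hq with h | h | h
      · exact Or.inl (Or.inl h)
      · by_cases hqp : q = p
        · exact Or.inl (Or.inl (hqp ▸ hpA))
        · exact Or.inl (Or.inr ⟨h, hqp⟩)
      · exact Or.inr h
    have hBd : (B \ {p}).ncard = 2 := by
      rw [Set.ncard_diff_singleton_of_mem hpB, hB]
    have h8 : Y.ncard ≤ 8 := by
      calc Y.ncard ≤ ((A ∪ (B \ {p})) ∪ C).ncard :=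
            Set.ncard_le_ncard hsub ((hAf.union (hBf.subset Set.diff_subset)).union hCf)
        _ ≤ (A ∪ (B \ {p})).ncard + C.ncard := Set.ncard_union_le _ _
        _ ≤ A.ncard + (B \ {p}).ncard + C.ncard := Nat.add_le_add_right (Set.ncard_union_le _ _) _
        _ = 8 := by rw [hA, hBd, hC]
    rw [hcard] at h8
    omega
  have hndz : ∀ p ∈ Y, ∀ i j : Fin 3, i ≠ j → p.rep i = 0 → p.rep j ≠ 0 := by
    have cover021 : ∀ q ∈ Y, q ∈ L0 ∨ q ∈ L2 ∨ q ∈ L1 := by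
      intro q hq
      rcases hcover q hq with h | h | h
      · exact Or.inl h
      · exact Or.inr (Or.inr h)
      · exact Or.inr (Or.inl h)
    have cover120 : ∀ q ∈ Y, q ∈ L1 ∨ q ∈ L2 ∨ q ∈ L0 := by
      intro q hq
      rcases hcover q hq with h | h | h
      · exact Or.inr (Or.inr h)
      · exact Or.inl h
      · exact Or.inr (Or.inl h)
    have k01 : ∀ p ∈ Y, p.rep 0 = 0 → p.rep 1 = 0 → False := fun p hp hi hj =>
      key L0 L1 L2 h0eq h1eq h2eq hL0fin hL1fin hL2fin hcover p ⟨hp, hi⟩ ⟨hp, hj⟩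
    have k02 : ∀ p ∈ Y, p.rep 0 = 0 → p.rep 2 = 0 → False := fun p hp hi hj =>
      key L0 L2 L1 h0eq h2eq h1eq hL0fin hL2fin hL1fin cover021 p ⟨hp, hi⟩ ⟨hp, hj⟩
    have k12 : ∀ p ∈ Y, p.rep 1 = 0 → p.rep 2 = 0 → False := fun p hp hi hj =>
      key L1 L2 L0 h1eq h2eq h0eq hL1fin hL2fin hL0fin cover120 p ⟨hp, hi⟩ ⟨hp, hj⟩
    intro p hp i j hij hi hj
    fin_cases i <;> fin_cases j
    · exact absurd rfl hij
    · exact k01 p hp hi hj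
    · exact k02 p hp hi hj
    · exact k01 p hp hj hi
    · exact absurd rfl hij
    · exact k12 p hp hi hj
    · exact k02 p hp hj hi
    · exact k12 p hp hj hi
    · exact absurd rfl hij
  -- the three "vertex" coefficients are nonzero
  have hAne : cA ≠ 0 := by
    intro hA
    have hvne : (![1, 0, 0] : Fin 3 → k) ≠ 0 := by
      intro h
      have := congrFun h 0
      simp at this
    obtain ⟨s, hs, hrep⟩ := rep_mk ![1, 0, 0] hvne
    have hptY : Projectivization.mk k ![1, 0, 0] hvne ∈ Y := by
      apply (hmemY _).2
      constructor
      · rw [hrep]; simp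
      · rw [hrep, heval]; simp [hA]
    exact hndz _ hptY 1 2 (by decide) (by rw [hrep]; simp) (by rw [hrep]; simp)
  have hBne : cB ≠ 0 := by
    intro hB
    have hvne : (![0, 1, 0] : Fin 3 → k) ≠ 0 := by
      intro h
      have := congrFun h 1
      simp at this
    obtain ⟨s, hs, hrep⟩ := rep_mk ![0, 1, 0] hvne
    have hptY : Projectivization.mk k ![0, 1, 0] hvne ∈ Y := by
      apply (hmemY _).2
      constructor
      · rw [hrep]; simp
      · rw [hrep, heval]; simp [hB]
    exact hndz _ hptY 0 2 (by decide) (by rw [hrep]; simp) (by rw [hrep]; simp)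
  have hDne : cD ≠ 0 := by
    intro hD
    have hvne : (![0, 0, 1] : Fin 3 → k) ≠ 0 := by
      intro h
      have := congrFun h 2
      simp at this
    obtain ⟨s, hs, hrep⟩ := rep_mk ![0, 0, 1] hvne
    have hptY : Projectivization.mk k ![0, 0, 1] hvne ∈ Y := by
      apply (hmemY _).2
      constructor
      · rw [hrep]; simp
      · rw [hrep, heval]; simp [hD]
    exact hndz _ hptY 0 1 (by decide) (by rw [hrep]; simp) (by rw [hrep]; simp)
  have hzero : ∀ r ∈ Y, ∃ j : Fin 3, r.rep j = 0 := by
    intro r hr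
    have h := ((hmemY r).1 hr).1
    rcases mul_eq_zero.1 h with h' | h'
    · rcases mul_eq_zero.1 h' with h'' | h''
      · exact ⟨0, h''⟩
      · exact ⟨1, h''⟩
    · exact ⟨2, h'⟩
  -- parameters of the points on each line
  set T : Set k := (fun p : Projectivization k (Fin 3 → k) => p.rep 1 / p.rep 0) '' L2 with hTdef
  set U : Set k := (fun p : Projectivization k (Fin 3 → k) => p.rep 2 / p.rep 1) '' L0 with hUdef
  set V : Set k := (fun p : Projectivization k (Fin 3 → k) => p.rep 0 / p.rep 2) '' L1 with hVdef
  have hWL2 : ∀ p ∈ L2, (∀ i, i ≠ (0 : Fin 3) → i ≠ 1 → p.rep i = 0) ∧ p.rep 0 ≠ 0 := by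
    intro p hp
    refine ⟨?_, hndz p hp.1 2 0 (by decide) hp.2⟩
    intro i h0 h1
    fin_cases i
    · exact absurd rfl h0
    · exact absurd rfl h1
    · exact hp.2
  have hWL0 : ∀ p ∈ L0, (∀ i, i ≠ (1 : Fin 3) → i ≠ 2 → p.rep i = 0) ∧ p.rep 1 ≠ 0 := by
    intro p hp
    refine ⟨?_, hndz p hp.1 0 1 (by decide) hp.2⟩
    intro i h1 h2'
    fin_cases i
    · exact hp.2
    · exact absurd rfl h1
    · exact absurd rfl h2'
  have hWL1 : ∀ p ∈ L1, (∀ i, i ≠ (2 : Fin 3) → i ≠ 0 → p.rep i = 0) ∧ p.rep 2 ≠ 0 := by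
    intro p hp
    refine ⟨?_, hndz p hp.1 1 2 (by decide) hp.2⟩
    intro i h2' h0
    fin_cases i
    · exact absurd rfl h0
    · exact hp.2
    · exact absurd rfl h2'
  have hTinj := ratio_injOn 0 1 L2 hWL2
  have hUinj := ratio_injOn 1 2 L0 hWL0
  have hVinj := ratio_injOn 2 0 L1 hWL1
  have hT3 : T.ncard = 3 := by
    rw [hTdef, Set.ncard_image_of_injOn hTinj]
    exact h2eq
  have hU3 : U.ncard = 3 := by
    rw [hUdef, Set.ncard_image_of_injOn hUinj]
    exact h0eq
  have hV3 : V.ncard = 3 := by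
    rw [hVdef, Set.ncard_image_of_injOn hVinj]
    exact h1eq
  have hTfin : T.Finite := by
    rw [hTdef]; exact hL2fin.image _
  have hUfin : U.Finite := by
    rw [hUdef]; exact hL0fin.image _
  have hVfin : V.Finite := by
    rw [hVdef]; exact hL1fin.image _
  have hT0 : ∀ t ∈ T, t ≠ 0 := by
    intro t ht
    rw [hTdef] at ht
    obtain ⟨p, hp, rfl⟩ := ht
    exact div_ne_zero (hndz p hp.1 2 1 (by decide) hp.2) (hWL2 p hp).2
  have hU0 : ∀ u ∈ U, u ≠ 0 := by
    intro u hu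
    rw [hUdef] at hu
    obtain ⟨p, hp, rfl⟩ := hu
    exact div_ne_zero (hndz p hp.1 0 2 (by decide) hp.2) (hWL0 p hp).2
  have hV0 : ∀ v ∈ V, v ≠ 0 := by
    intro v hv
    rw [hVdef] at hv
    obtain ⟨p, hp, rfl⟩ := hv
    exact div_ne_zero (hndz p hp.1 1 0 (by decide) hp.2) (hWL1 p hp).2
  -- roots of the binary cubics
  have hTroot : ∀ t ∈ T, cA + cE * t + cG * t ^ 2 + cB * t ^ 3 = 0 := by
    intro t ht
    rw [hTdef] at ht
    obtain ⟨p, hp, rfl⟩ := ht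
    exact root_of_rel cA cE cG cB (p.rep 0) (p.rep 1) (hWL2 p hp).2 (hrelL2 p hp)
  have hUroot : ∀ u ∈ U, cB + cH * u + cJ * u ^ 2 + cD * u ^ 3 = 0 := by
    intro u hu
    rw [hUdef] at hu
    obtain ⟨p, hp, rfl⟩ := hu
    exact root_of_rel cB cH cJ cD (p.rep 1) (p.rep 2) (hWL0 p hp).2 (hrelL0 p hp)
  have hVroot : ∀ v ∈ V, cD + cI * v + cF * v ^ 2 + cA * v ^ 3 = 0 := by
    intro v hv
    rw [hVdef] at hv
    obtain ⟨p, hp, rfl⟩ := hv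
    exact root_of_rel cD cI cF cA (p.rep 2) (p.rep 0) (hWL1 p hp).2 (hrelL1 p hp)
  -- the cross relations coming from the Hesse property
  have crossTU : ∀ t ∈ T, ∀ u ∈ U, -(t * u)⁻¹ ∈ V := by
    intro t ht u hu
    rw [hTdef] at ht
    rw [hUdef] at hu
    obtain ⟨p, hpL, rfl⟩ := ht
    obtain ⟨q, hqL, rfl⟩ := hu
    obtain ⟨r, hrY, hrc, hval⟩ := hesse_cross Y hzero hndz hhesse 2 0 1
      (by decide) (by decide) (by decide) (by decide) p hpL.1 hpL.2 q hqL.1 hqL.2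
    rw [hVdef]
    exact ⟨r, ⟨hrY, hrc⟩, hval⟩
  have crossUV : ∀ u ∈ U, ∀ v ∈ V, -(u * v)⁻¹ ∈ T := by
    intro u hu v hv
    rw [hUdef] at hu
    rw [hVdef] at hv
    obtain ⟨p, hpL, rfl⟩ := hu
    obtain ⟨q, hqL, rfl⟩ := hv
    obtain ⟨r, hrY, hrc, hval⟩ := hesse_cross Y hzero hndz hhesse 0 1 2
      (by decide) (by decide) (by decide) (by decide) p hpL.1 hpL.2 q hqL.1 hqL.2
    rw [hTdef]
    exact ⟨r, ⟨hrY, hrc⟩, hval⟩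
  have crossVT : ∀ v ∈ V, ∀ t ∈ T, -(v * t)⁻¹ ∈ U := by
    intro v hv t ht
    rw [hVdef] at hv
    rw [hTdef] at ht
    obtain ⟨p, hpL, rfl⟩ := hv
    obtain ⟨q, hqL, rfl⟩ := ht
    obtain ⟨r, hrY, hrc, hval⟩ := hesse_cross Y hzero hndz hhesse 1 2 0
      (by decide) (by decide) (by decide) (by decide) p hpL.1 hpL.2 q hqL.1 hqL.2
    rw [hUdef]
    exact ⟨r, ⟨hrY, hrc⟩, hval⟩
  -- all elements of T (resp. U, V) have the same cube
  have hTcube := cube_eq T U V hTfin hUfin hVfin hU3 hV3 hT0 hU0 crossTU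
  have hUcube := cube_eq U V T hUfin hVfin hTfin hV3 hT3 hU0 hV0 crossUV
  have hVcube := cube_eq V T U hVfin hTfin hUfin hT3 hU3 hV0 hT0 crossVT
  -- hence the mixed coefficients vanish
  obtain ⟨hEz, hGz⟩ := coeff_vanish cA cE cG cB T hT3 hTroot hTcube
  obtain ⟨hHz, hJz⟩ := coeff_vanish cB cH cJ cD U hU3 hUroot hUcube
  obtain ⟨hIz, hFz⟩ := coeff_vanish cD cI cF cA V hV3 hVroot hVcube
  -- the final form of c
  have hcform : c = C cA * X 0 ^ 3 + C cB * X 1 ^ 3 + C cD * X 2 ^ 3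
      + C cM * (X 0 * X 1 * X 2) := by
    conv_lhs => rw [expansion c hchom]
    rw [← hcAdef, ← hcEdef, ← hcFdef, ← hcGdef, ← hcIdef, ← hcMdef, ← hcBdef, ← hcHdef,
      ← hcJdef, ← hcDdef]
    rw [hEz, hFz, hGz, hIz, hHz, hJz]
    simp only [map_zero, zero_mul, add_zero, zero_add]
    try ring
  refine ⟨cA, cB, cD, hAne, hBne, hDne, ?_⟩
  rw [hspanZ]
  apply le_antisymm
  · rw [Submodule.span_le]
    rintro f hf
    simp only [Set.mem_insert_iff, Set.mem_singleton_iff] at hf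
    rcases hf with h | h <;> rw [h]
    · exact Submodule.subset_span (Set.mem_insert_of_mem _ rfl)
    · have hc' : c = (C cA * X 0 ^ 3 + C cB * X 1 ^ 3 + C cD * X 2 ^ 3)
          + cM • (X 0 * X 1 * X 2 : MvPolynomial (Fin 3) k) := by
        rw [smul_eq_C_mul, hcform]
        try ring
      rw [hc']
      exact Submodule.add_mem _ (Submodule.subset_span (Set.mem_insert _ _))
        (Submodule.smul_mem _ _ (Submodule.subset_span (Set.mem_insert_of_mem _ rfl)))
  · rw [Submodule.span_le]
    rintro f hf
    simp only [Set.mem_insert_iff, Set.mem_singleton_iff] at hf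
    rcases hf with h | h <;> rw [h]
    · have hP : C cA * X 0 ^ 3 + C cB * X 1 ^ 3 + C cD * X 2 ^ 3
          = c - cM • (X 0 * X 1 * X 2 : MvPolynomial (Fin 3) k) := by
        rw [smul_eq_C_mul, hcform]
        try ring
      rw [hP]
      exact Submodule.sub_mem _ (Submodule.subset_span (Set.mem_insert_of_mem _ rfl))
        (Submodule.smul_mem _ _ (Submodule.subset_span (Set.mem_insert _ _)))
    · exact Submodule.subset_span (Set.mem_insert _ _)
end
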